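/- Let α ∈ (0,1), let C_∞ be a symmetric positive definite matrix satisfying C_∞⁻¹ = GᵀΣ_ν⁻¹G + (α²C_∞ + Σ_ω)⁻¹, set Ĉ_∞ = α²C_∞ + Σ_ω, and let m_∞ satisfy C_∞⁻¹ m_∞ = GᵀΣ_ν⁻¹y + Ĉ_∞⁻¹(α m_∞ + (1−α) r_0). Then m_∞ satisfies GᵀΣ_ν⁻¹(y − G m_∞) = (1−α) Ĉ_∞⁻¹(m_∞ − r_0), and consequently m_∞ is the unique minimizer over θ ∈ ℝ^{N_θ} of the Tikhonov-regularized least squares functional Φ_R(θ) = ½‖Σ_ν^{-1/2}(y − Gθ)‖² + ((1−α)/2)‖Ĉ_∞^{-1/2}(θ − r_0)‖². -/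

import Mathlib

open Matrix

section PosSemidefSqrt

open scoped ComplexOrder

/-- The positive semidefinite square root of a positive semidefinite matrix
(the definition `Matrix.PosSemidef.sqrt` of the older Mathlib, since removed). -/
noncomputable def Matrix.PosSemidef.sqrt {n 𝕜 : Type*} [Fintype n] [DecidableEq n] [RCLike 𝕜]
    {A : Matrix n n 𝕜} (hA : A.PosSemidef) : Matrix n n 𝕜 :=
  (hA.1.eigenvectorUnitary : Matrix n n 𝕜) * diagonal ((↑) ∘ (√·) ∘ hA.1.eigenvalues) *
    (star hA.1.eigenvectorUnitary : Matrix n n 𝕜)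

end PosSemidefSqrt

private lemma symm_dot' {n m : ℕ} (M : Matrix (Fin m) (Fin n) ℝ) (a : Fin n → ℝ) (b : Fin m → ℝ) :
    (M *ᵥ a) ⬝ᵥ b = a ⬝ᵥ (Mᵀ *ᵥ b) := by
  rw [dotProduct_mulVec, vecMul_transpose, dotProduct_comm]

private lemma sqrt_mul_self_real' {n : ℕ} {A : Matrix (Fin n) (Fin n) ℝ} (hA : A.PosSemidef) :
    hA.sqrt * hA.sqrt = A := by
  have hU : star (hA.1.eigenvectorUnitary : Matrix (Fin n) (Fin n) ℝ) *
      (hA.1.eigenvectorUnitary : Matrix (Fin n) (Fin n) ℝ) = 1 :=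
    Unitary.star_mul_self_of_mem hA.1.eigenvectorUnitary.2
  have hD : diagonal ((RCLike.ofReal : ℝ → ℝ) ∘ (√·) ∘ hA.1.eigenvalues) *
      diagonal ((RCLike.ofReal : ℝ → ℝ) ∘ (√·) ∘ hA.1.eigenvalues)
      = diagonal ((RCLike.ofReal : ℝ → ℝ) ∘ hA.1.eigenvalues) := by
    rw [diagonal_mul_diagonal]
    congr 1; funext i
    simp [Real.mul_self_sqrt (hA.eigenvalues_nonneg i)]
  conv_rhs => rw [hA.1.spectral_theorem, Unitary.conjStarAlgAut_apply]
  simp only [Matrix.PosSemidef.sqrt, Matrix.mul_assoc]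
  rw [← Matrix.mul_assoc (star _) _ (diagonal _ * _), hU, Matrix.one_mul,
    ← Matrix.mul_assoc (diagonal _) (diagonal _), hD]

private lemma sqrt_transpose_real' {n : ℕ} {A : Matrix (Fin n) (Fin n) ℝ} (hA : A.PosSemidef) :
    (hA.sqrt)ᵀ = hA.sqrt := by
  rw [← Matrix.conjTranspose_eq_transpose_of_trivial]
  simp [Matrix.PosSemidef.sqrt, Matrix.conjTranspose_mul, Matrix.mul_assoc,
    Matrix.star_eq_conjTranspose, Matrix.conjTranspose_eq_transpose_of_trivial]

private lemma normsq_sqrtInv' {n : ℕ} (A : Matrix (Fin n) (Fin n) ℝ) (hA : A.PosDef)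
    (v : EuclideanSpace ℝ (Fin n)) :
    ‖(show EuclideanSpace ℝ (Fin n) from WithLp.toLp 2 (hA.posSemidef.sqrt⁻¹ *ᵥ v))‖ ^ 2
      = v ⬝ᵥ (A⁻¹ *ᵥ v) := by
  set S := hA.posSemidef.sqrt with hSdef
  have hS2 : S * S = A := sqrt_mul_self_real' hA.posSemidef
  have hSsym : Sᵀ = S := sqrt_transpose_real' hA.posSemidef
  have hinv : A⁻¹ = S⁻¹ * S⁻¹ := by rw [← hS2, Matrix.mul_inv_rev]
  have hsymInv : (S⁻¹)ᵀ = S⁻¹ := by rw [Matrix.transpose_nonsing_inv, hSsym]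
  have hn : ∀ w : EuclideanSpace ℝ (Fin n), ‖w‖ ^ 2 = w ⬝ᵥ w := by
    intro w
    rw [EuclideanSpace.norm_sq_eq]
    simp only [Real.norm_eq_abs, sq_abs, dotProduct, sq, abs_mul_abs_self]
  rw [hn, WithLp.ofLp_toLp]
  rw [show ((S⁻¹ *ᵥ v) ⬝ᵥ (S⁻¹ *ᵥ v)) = v ⬝ᵥ ((S⁻¹)ᵀ *ᵥ (S⁻¹ *ᵥ v)) from
    symm_dot' _ _ _]
  rw [hsymInv, mulVec_mulVec, ← hinv]

private lemma quad_expand' {n : ℕ} (P : Matrix (Fin n) (Fin n) ℝ) (hP : Pᵀ = P)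
    (a b : Fin n → ℝ) :
    (a + b) ⬝ᵥ P *ᵥ (a + b)
      = a ⬝ᵥ P *ᵥ a + 2 * (b ⬝ᵥ P *ᵥ a) + b ⬝ᵥ P *ᵥ b := by
  have hba : a ⬝ᵥ P *ᵥ b = b ⬝ᵥ P *ᵥ a := by
    rw [dotProduct_comm, symm_dot', hP]
  simp only [mulVec_add, dotProduct_add, add_dotProduct, hba]
  ring

private lemma part1_aux' {Nθ Ny : ℕ} (G : Matrix (Fin Ny) (Fin Nθ) ℝ)
    (K R : Matrix (Fin Nθ) (Fin Nθ) ℝ) (W : Matrix (Fin Nθ) (Fin Ny) ℝ)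
    (y : Fin Ny → ℝ) (r₀ m : Fin Nθ → ℝ) (α : ℝ)
    (hK : K = W * G + R)
    (hm : K *ᵥ m = W *ᵥ y + R *ᵥ (α • m + (1 - α) • r₀)) :
    W *ᵥ (y - G *ᵥ m) = (1 - α) • (R *ᵥ (m - r₀)) := by
  have hm' : (W * G) *ᵥ m + R *ᵥ m = W *ᵥ y + R *ᵥ (α • m + (1 - α) • r₀) := by
    rw [← add_mulVec, ← hK]; exact hm
  have hv : m - (α • m + (1 - α) • r₀) = (1 - α) • (m - r₀) := by module
  calc W *ᵥ (y - G *ᵥ m)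
      = W *ᵥ y - (W * G) *ᵥ m := by rw [mulVec_sub, mulVec_mulVec]
    _ = R *ᵥ m - R *ᵥ (α • m + (1 - α) • r₀) := by
        rw [sub_eq_sub_iff_add_eq_add, ← hm']; abel
    _ = R *ᵥ (m - (α • m + (1 - α) • r₀)) := by rw [mulVec_sub]
    _ = (1 - α) • (R *ᵥ (m - r₀)) := by rw [hv, mulVec_smul]

private lemma part2_aux' {Nθ Ny : ℕ} (G : Matrix (Fin Ny) (Fin Nθ) ℝ)
    (y : Fin Ny → ℝ) (r₀ m : Fin Nθ → ℝ)
    (P : Matrix (Fin Ny) (Fin Ny) ℝ) (hP : P.PosDef)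
    (R : Matrix (Fin Nθ) (Fin Nθ) ℝ) (hR : R.PosDef)
    (β : ℝ) (hβ : 0 < β)
    (h1 : (Gᵀ * P) *ᵥ (y - G *ᵥ m) = β • (R *ᵥ (m - r₀)))
    (θ : Fin Nθ → ℝ) (hθ : θ ≠ m) :
    (1 / 2) * ((y - G *ᵥ m) ⬝ᵥ P *ᵥ (y - G *ᵥ m))
        + (β / 2) * ((m - r₀) ⬝ᵥ R *ᵥ (m - r₀))
      < (1 / 2) * ((y - G *ᵥ θ) ⬝ᵥ P *ᵥ (y - G *ᵥ θ))
        + (β / 2) * ((θ - r₀) ⬝ᵥ R *ᵥ (θ - r₀)) := by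
  have hPsym : Pᵀ = P := (by simpa using hP.isHermitian : P.IsSymm)
  have hRsym : Rᵀ = R := (by simpa using hR.isHermitian : R.IsSymm)
  set d : Fin Nθ → ℝ := θ - m with hd
  have hdne : d ≠ 0 := sub_ne_zero.mpr hθ
  have hy : y - G *ᵥ θ = (y - G *ᵥ m) + (-(G *ᵥ d)) := by
    rw [hd, mulVec_sub]; abel
  have hr : θ - r₀ = (m - r₀) + d := by rw [hd]; abel
  have E1 := quad_expand' P hPsym (y - G *ᵥ m) (-(G *ᵥ d))
  have E2 := quad_expand' R hRsym (m - r₀) d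
  have hcross : (-(G *ᵥ d)) ⬝ᵥ P *ᵥ (y - G *ᵥ m)
      = -(β * (d ⬝ᵥ R *ᵥ (m - r₀))) := by
    rw [neg_dotProduct, symm_dot' G d, mulVec_mulVec, h1, dotProduct_smul, smul_eq_mul]
  have hqy : 0 ≤ (-(G *ᵥ d)) ⬝ᵥ P *ᵥ (-(G *ᵥ d)) := by
    simpa using hP.posSemidef.dotProduct_mulVec_nonneg (-(G *ᵥ d))
  have hqd : 0 < d ⬝ᵥ R *ᵥ d := by
    simpa using hR.dotProduct_mulVec_pos hdne
  rw [hy, hr, E1, E2]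
  nlinarith [hcross, hqy, hqd, hβ]

/-- Let `α ∈ (0,1)`, let `Cinf` be a symmetric positive definite
matrix satisfying `Cinf⁻¹ = Gᵀ Sν⁻¹ G + (α² Cinf + Sω)⁻¹`, set
`Chat = α² Cinf + Sω`, and let `minf` satisfy
`Cinf⁻¹ minf = Gᵀ Sν⁻¹ y + Chat⁻¹ (α minf + (1−α) r₀)`. Then `minf` satisfies
`Gᵀ Sν⁻¹ (y − G minf) = (1−α) Chat⁻¹ (minf − r₀)`, and consequently `minf` is the
unique minimizer of the Tikhonov-regularized least squares functional
`Φ_R(θ) = ½‖Sν^{-1/2}(y − Gθ)‖² + ((1−α)/2)‖Chat^{-1/2}(θ − r₀)‖²`. -/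
theorem kalman_limit_mean_is_tikhonov_minimizer
    {Nθ Ny : ℕ} (hNθ : 0 < Nθ) (hNy : 0 < Ny)
    (G : Matrix (Fin Ny) (Fin Nθ) ℝ)
    (y : EuclideanSpace ℝ (Fin Ny)) (r₀ : EuclideanSpace ℝ (Fin Nθ))
    (Sν : Matrix (Fin Ny) (Fin Ny) ℝ) (hSν : Sν.PosDef)
    (Sω : Matrix (Fin Nθ) (Fin Nθ) ℝ) (hSω : Sω.PosDef)
    (α : ℝ) (hα : α ∈ Set.Ioo (0 : ℝ) 1)
    (Cinf : Matrix (Fin Nθ) (Fin Nθ) ℝ) (hCinf : Cinf.PosDef)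
    (hfix : Cinf⁻¹ = Gᵀ * Sν⁻¹ * G + (α ^ 2 • Cinf + Sω)⁻¹)
    (Chat : Matrix (Fin Nθ) (Fin Nθ) ℝ) (hChat : Chat = α ^ 2 • Cinf + Sω)
    (hChatPD : Chat.PosDef)
    (minf : EuclideanSpace ℝ (Fin Nθ))
    (hminf : Cinf⁻¹ *ᵥ minf =
      (Gᵀ * Sν⁻¹) *ᵥ y + Chat⁻¹ *ᵥ (α • minf + (1 - α) • r₀))
    (ΦR : EuclideanSpace ℝ (Fin Nθ) → ℝ)
    (hΦR : ∀ θ : EuclideanSpace ℝ (Fin Nθ), ΦR θ =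
      (1 / 2) *
        ‖show EuclideanSpace ℝ (Fin Ny) from WithLp.toLp 2
            (hSν.posSemidef.sqrt⁻¹ *ᵥ (y - show EuclideanSpace ℝ (Fin Ny) from WithLp.toLp 2 (G *ᵥ θ)))‖ ^ 2 +
      ((1 - α) / 2) *
        ‖show EuclideanSpace ℝ (Fin Nθ) from WithLp.toLp 2 (hChatPD.posSemidef.sqrt⁻¹ *ᵥ (θ - r₀))‖ ^ 2) :
    ((Gᵀ * Sν⁻¹) *ᵥ (y - show EuclideanSpace ℝ (Fin Ny) from WithLp.toLp 2 (G *ᵥ minf)) =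
        (1 - α) • (Chat⁻¹ *ᵥ (minf - r₀))) ∧
      (∀ θ : EuclideanSpace ℝ (Fin Nθ), θ ≠ minf → ΦR minf < ΦR θ) := by
  have hfix' : Cinf⁻¹ = (Gᵀ * Sν⁻¹) * G + Chat⁻¹ := by
    rw [hfix, hChat, Matrix.mul_assoc]
  have h1 :=
    part1_aux' G Cinf⁻¹ Chat⁻¹ (Gᵀ * Sν⁻¹) y r₀ minf α hfix' hminf
  refine ⟨by simpa using h1, ?_⟩
  have hΦ' : ∀ θ : EuclideanSpace ℝ (Fin Nθ), ΦR θ =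
      (1 / 2) * ((y - show EuclideanSpace ℝ (Fin Ny) from WithLp.toLp 2 (G *ᵥ θ)) ⬝ᵥ
          Sν⁻¹ *ᵥ (y - show EuclideanSpace ℝ (Fin Ny) from WithLp.toLp 2 (G *ᵥ θ))) +
      ((1 - α) / 2) * ((θ - r₀) ⬝ᵥ Chat⁻¹ *ᵥ (θ - r₀)) := by
    intro θ
    rw [hΦR θ, normsq_sqrtInv' Sν hSν, normsq_sqrtInv' Chat hChatPD]
    simp only [WithLp.ofLp_sub, WithLp.ofLp_toLp]
  intro θ hθ
  rw [hΦ' θ, hΦ' minf]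
  simp only [WithLp.ofLp_sub, WithLp.ofLp_toLp]
  exact part2_aux' G y r₀ minf Sν⁻¹ hSν.inv Chat⁻¹ hChatPD.inv (1 - α)
    (by linarith [hα.2]) h1 θ (fun h => hθ (by ext i; exact congrFun h i))
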